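/- For all real numbers x, y, z, t, q, p, the matrix P = x·Γ_x + y·Γ_y + z·Γ_z + t·Γ_t + q·Γ_q + p·Γ_p satisfies trace(P) = 0 and P² = (x² + y² + z² + q² − p² − t²) · I₄. -/

import Mathlib

open Quaternion Matrix

/-- The split quaternions, with K = i, L = j, KL = k. -/
notation "ℍ'" => QuaternionAlgebra ℝ (-1) 0 1

/-- A = ℍ' ⊗_ℝ ℂ, realized as the quaternion algebra over ℂ with i² = −1, j² = 1. -/
abbrev SplitQC := QuaternionAlgebra ℂ (-1) 0 1

namespace SplitQC
/-- K, the split-quaternion unit with K² = −1 -/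
def K : SplitQC := ⟨0, 1, 0, 0⟩
/-- L, the split-quaternion unit with L² = 1 -/
def L : SplitQC := ⟨0, 0, 1, 0⟩
/-- KL, with (KL)² = 1 -/
def KL : SplitQC := ⟨0, 0, 0, 1⟩
/-- ℓ = 1 ⊗ i, the complex unit -/
def ll : SplitQC := ⟨Complex.I, 0, 0, 0⟩
end SplitQC

open SplitQC

/-- Index set {x, y, z, t, q, p} for the gamma matrices. -/
inductive Idx | x | y | z | t | q | p
deriving DecidableEq

/-- The gamma matrices generating Cl(4,2). -/
def Γ : Idx → Matrix (Fin 4) (Fin 4) SplitQC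
| Idx.x => !![0,0,0,1; 0,0,1,0; 0,1,0,0; 1,0,0,0]
| Idx.y => !![0,0,0,-ll; 0,0,ll,0; 0,-ll,0,0; ll,0,0,0]
| Idx.z => !![0,0,1,0; 0,0,0,-1; 1,0,0,0; 0,-1,0,0]
| Idx.t => !![0,0,L,0; 0,0,0,L; -L,0,0,0; 0,-L,0,0]
| Idx.q => !![0,0,K,0; 0,0,0,K; -K,0,0,0; 0,-K,0,0]
| Idx.p => !![0,0,KL,0; 0,0,0,KL; -KL,0,0,0; 0,-KL,0,0]

/-- The metric of signature (4,2). -/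
def g : Idx → Idx → ℝ
| Idx.x, Idx.x => 1 | Idx.y, Idx.y => 1 | Idx.z, Idx.z => 1 | Idx.q, Idx.q => 1
| Idx.t, Idx.t => -1 | Idx.p, Idx.p => -1
| _, _ => 0

set_option maxHeartbeats 1000000 in
lemma mul_fin_four {R : Type*} [NonUnitalNonAssocSemiring R]
    (a11 a12 a13 a14 a21 a22 a23 a24 a31 a32 a33 a34 a41 a42 a43 a44
     b11 b12 b13 b14 b21 b22 b23 b24 b31 b32 b33 b34 b41 b42 b43 b44 : R) :
    !![a11,a12,a13,a14; a21,a22,a23,a24; a31,a32,a33,a34; a41,a42,a43,a44] *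
    !![b11,b12,b13,b14; b21,b22,b23,b24; b31,b32,b33,b34; b41,b42,b43,b44] =
    !![a11*b11+a12*b21+a13*b31+a14*b41, a11*b12+a12*b22+a13*b32+a14*b42,
       a11*b13+a12*b23+a13*b33+a14*b43, a11*b14+a12*b24+a13*b34+a14*b44;
       a21*b11+a22*b21+a23*b31+a24*b41, a21*b12+a22*b22+a23*b32+a24*b42,
       a21*b13+a22*b23+a23*b33+a24*b43, a21*b14+a22*b24+a23*b34+a24*b44;
       a31*b11+a32*b21+a33*b31+a34*b41, a31*b12+a32*b22+a33*b32+a34*b42,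
       a31*b13+a32*b23+a33*b33+a34*b43, a31*b14+a32*b24+a33*b34+a34*b44;
       a41*b11+a42*b21+a43*b31+a44*b41, a41*b12+a42*b22+a43*b32+a44*b42,
       a41*b13+a42*b23+a43*b33+a44*b43, a41*b14+a42*b24+a43*b34+a44*b44] := by
  refine Matrix.ext fun i j => ?_
  fin_cases i <;> fin_cases j <;>
    simp [Matrix.mul_apply, Fin.sum_univ_four]

set_option maxHeartbeats 1000000 in
lemma hP_aux (x y z t q p : ℝ) :
    x • Γ Idx.x + y • Γ Idx.y + z • Γ Idx.z +
      t • Γ Idx.t + q • Γ Idx.q + p • Γ Idx.p =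
    !![0,0,(⟨(z:ℂ), q, t, p⟩:SplitQC),(⟨(x:ℂ) - y*Complex.I,0,0,0⟩:SplitQC);
      0,0,(⟨(x:ℂ) + y*Complex.I,0,0,0⟩:SplitQC),(⟨-(z:ℂ), q, t, p⟩:SplitQC);
      (⟨(z:ℂ), -q, -t, -p⟩:SplitQC),(⟨(x:ℂ) - y*Complex.I,0,0,0⟩:SplitQC),0,0;
      (⟨(x:ℂ) + y*Complex.I,0,0,0⟩:SplitQC),(⟨-(z:ℂ), -q, -t, -p⟩:SplitQC),0,0] := by
  refine Matrix.ext fun i j => ?_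
  fin_cases i <;> fin_cases j <;>
    simp [Γ, K, L, KL, ll, Matrix.smul_apply, Matrix.vecHead, Matrix.vecTail,
      QuaternionAlgebra.ext_iff, Complex.ext_iff] <;>
    and_intros <;> first | trivial | ring

set_option maxHeartbeats 1000000 in
lemma sq_aux (x y z t q p : ℝ) :
    (!![0,0,(⟨(z:ℂ), q, t, p⟩:SplitQC),(⟨(x:ℂ) - y*Complex.I,0,0,0⟩:SplitQC);
      0,0,(⟨(x:ℂ) + y*Complex.I,0,0,0⟩:SplitQC),(⟨-(z:ℂ), q, t, p⟩:SplitQC);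
      (⟨(z:ℂ), -q, -t, -p⟩:SplitQC),(⟨(x:ℂ) - y*Complex.I,0,0,0⟩:SplitQC),0,0;
      (⟨(x:ℂ) + y*Complex.I,0,0,0⟩:SplitQC),(⟨-(z:ℂ), -q, -t, -p⟩:SplitQC),0,0] * !![0,0,(⟨(z:ℂ), q, t, p⟩:SplitQC),(⟨(x:ℂ) - y*Complex.I,0,0,0⟩:SplitQC);
      0,0,(⟨(x:ℂ) + y*Complex.I,0,0,0⟩:SplitQC),(⟨-(z:ℂ), q, t, p⟩:SplitQC);
      (⟨(z:ℂ), -q, -t, -p⟩:SplitQC),(⟨(x:ℂ) - y*Complex.I,0,0,0⟩:SplitQC),0,0;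
      (⟨(x:ℂ) + y*Complex.I,0,0,0⟩:SplitQC),(⟨-(z:ℂ), -q, -t, -p⟩:SplitQC),0,0] : Matrix (Fin 4) (Fin 4) SplitQC) = !![((x ^ 2 + y ^ 2 + z ^ 2 + q ^ 2 - p ^ 2 - t ^ 2 : ℝ) • 1 : SplitQC),0,0,0;
      0,(x ^ 2 + y ^ 2 + z ^ 2 + q ^ 2 - p ^ 2 - t ^ 2 : ℝ) • 1,0,0;
      0,0,(x ^ 2 + y ^ 2 + z ^ 2 + q ^ 2 - p ^ 2 - t ^ 2 : ℝ) • 1,0;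
      0,0,0,(x ^ 2 + y ^ 2 + z ^ 2 + q ^ 2 - p ^ 2 - t ^ 2 : ℝ) • 1] := by
  rw [mul_fin_four]
  refine Matrix.ext fun i j => ?_
  fin_cases i <;> fin_cases j <;>
    simp only [Matrix.cons_val', Matrix.cons_val_zero, Matrix.cons_val_one,
      Matrix.head_cons, Matrix.head_fin_const, Matrix.empty_val',
      Matrix.cons_val_fin_one, Matrix.cons_val_two, Matrix.cons_val_three, Matrix.tail_cons] <;>
    simp [QuaternionAlgebra.ext_iff, Complex.ext_iff, ← Complex.ofReal_pow] <;>
    and_intros <;> first | trivial | ring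

set_option maxHeartbeats 1000000 in
lemma diag_aux (x y z t q p : ℝ) :
    (!![((x ^ 2 + y ^ 2 + z ^ 2 + q ^ 2 - p ^ 2 - t ^ 2 : ℝ) • 1 : SplitQC),0,0,0;
      0,(x ^ 2 + y ^ 2 + z ^ 2 + q ^ 2 - p ^ 2 - t ^ 2 : ℝ) • 1,0,0;
      0,0,(x ^ 2 + y ^ 2 + z ^ 2 + q ^ 2 - p ^ 2 - t ^ 2 : ℝ) • 1,0;
      0,0,0,(x ^ 2 + y ^ 2 + z ^ 2 + q ^ 2 - p ^ 2 - t ^ 2 : ℝ) • 1] : Matrix (Fin 4) (Fin 4) SplitQC) =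
    (x ^ 2 + y ^ 2 + z ^ 2 + q ^ 2 - p ^ 2 - t ^ 2) • (1 : Matrix (Fin 4) (Fin 4) SplitQC) := by
  refine Matrix.ext fun i j => ?_
  fin_cases i <;> fin_cases j <;>
    simp [Matrix.one_apply, Matrix.vecHead, Matrix.vecTail]

set_option maxHeartbeats 1000000 in
lemma tr_aux (x y z t q p : ℝ) :
    Matrix.trace (!![0,0,(⟨(z:ℂ), q, t, p⟩:SplitQC),(⟨(x:ℂ) - y*Complex.I,0,0,0⟩:SplitQC);
      0,0,(⟨(x:ℂ) + y*Complex.I,0,0,0⟩:SplitQC),(⟨-(z:ℂ), q, t, p⟩:SplitQC);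
      (⟨(z:ℂ), -q, -t, -p⟩:SplitQC),(⟨(x:ℂ) - y*Complex.I,0,0,0⟩:SplitQC),0,0;
      (⟨(x:ℂ) + y*Complex.I,0,0,0⟩:SplitQC),(⟨-(z:ℂ), -q, -t, -p⟩:SplitQC),0,0] : Matrix (Fin 4) (Fin 4) SplitQC) = 0 := by
  simp [Matrix.trace, Fin.sum_univ_four, Matrix.vecHead, Matrix.vecTail]

/-- For real x, y, z, t, q, p, the matrix P = x Γ_x + y Γ_y + z Γ_z + t Γ_t + q Γ_q + p Γ_p
is trace free and P² = (x² + y² + z² + q² − p² − t²) I₄. -/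
theorem traceP_eq_zero_and_P_sq (x y z t q p : ℝ) :
    Matrix.trace (x • Γ Idx.x + y • Γ Idx.y + z • Γ Idx.z +
      t • Γ Idx.t + q • Γ Idx.q + p • Γ Idx.p) = 0 ∧
    (x • Γ Idx.x + y • Γ Idx.y + z • Γ Idx.z +
      t • Γ Idx.t + q • Γ Idx.q + p • Γ Idx.p) ^ 2 =
      (x ^ 2 + y ^ 2 + z ^ 2 + q ^ 2 - p ^ 2 - t ^ 2) •
        (1 : Matrix (Fin 4) (Fin 4) SplitQC) := by
  refine ⟨?_, ?_⟩
  · rw [hP_aux]; exact tr_aux x y z t q p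
  · rw [hP_aux, pow_two, sq_aux, diag_aux]
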